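/- A Zadoff–Chu sequence of odd prime length N with root u coprime to N has zero periodic autocorrelation at all nonzero lags: for 1 ≤ τ ≤ N−1, ∑_{n=0}^{N−1} x[n] conj(x[(n+τ) mod N]) = 0, where x[n] = exp(−iπ u n(n+1)/N). -/

import Mathlib

open Complex

noncomputable def zcf (N u : ℕ) (a : ℤ) : ℂ :=
  Complex.exp (((Real.pi : ℂ) * (u : ℂ) * (a : ℂ) / (N : ℂ)) * Complex.I)

lemma zcf_add (N u : ℕ) (a b : ℤ) : zcf N u (a + b) = zcf N u a * zcf N u b := by
  rw [zcf, zcf, zcf, ← Complex.exp_add]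
  congr 1
  push_cast
  ring

lemma zcf_congr (N u : ℕ) (hN : N ≠ 0) {a b : ℤ} (h : (2 * N : ℤ) ∣ a - b) :
    zcf N u a = zcf N u b := by
  obtain ⟨t, ht⟩ := h
  have : a = b + 2 * N * t := by linarith
  subst this
  rw [zcf_add]
  have : zcf N u (2 * N * t) = 1 := by
    rw [zcf]
    have hNc : (N : ℂ) ≠ 0 := Nat.cast_ne_zero.mpr hN
    have : ((Real.pi : ℂ) * u * ((2 * N * t : ℤ) : ℂ) / N) * Complex.I
        = ((u * t : ℤ) : ℂ) * (2 * Real.pi * Complex.I) := by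
      field_simp
      push_cast
      ring
    rw [this, Complex.exp_int_mul_two_pi_mul_I]
  rw [this, mul_one]

lemma key_dvd (N : ℕ) (hodd : Odd N) {a b : ℤ} (h : (N : ℤ) ∣ a - b) :
    (2 * N : ℤ) ∣ a * (a + 1) - b * (b + 1) := by
  obtain ⟨c, hc⟩ := h
  have ha : a = b + N * c := by linarith
  subst ha
  have heven : Even (c * (2 * b + N * c + 1)) := by
    rcases Int.even_or_odd c with hc | hc
    · exact hc.mul_right _
    · have hNodd : Odd ((N : ℤ) * c) := by
        exact (Int.odd_coe_nat N |>.mpr hodd).mul hc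
      obtain ⟨k, hk⟩ := hNodd
      refine Even.mul_left ⟨b + k + 1, ?_⟩ c
      rw [hk]; ring
  obtain ⟨k, hk⟩ := heven
  exact ⟨k, by nlinarith [hk]⟩

/-- The Zadoff–Chu sequence of length `N` with root `u`: `x[n] = exp(-iπ u n(n+1)/N)`. -/
noncomputable def zadoffChu (N u n : ℕ) : ℂ :=
  Complex.exp ((-((Real.pi : ℂ) * (u : ℂ) * (n : ℂ) * ((n : ℂ) + 1)) / (N : ℂ)) * Complex.I)

lemma zc_eq (N u n : ℕ) : zadoffChu N u n = zcf N u (-(n * (n + 1))) := by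
  rw [zadoffChu, zcf]
  congr 1
  push_cast
  ring

lemma zc_conj (N u n : ℕ) : (starRingEnd ℂ) (zadoffChu N u n) = zcf N u (n * (n + 1)) := by
  rw [zadoffChu, zcf, ← Complex.exp_conj]
  congr 1
  simp [map_div₀, Complex.conj_I]
  push_cast
  ring

/-- A Zadoff–Chu sequence of odd prime length `N` with root `u` coprime to `N` has zero periodic
autocorrelation at all nonzero lags `1 ≤ τ ≤ N - 1`. -/
theorem zadoffChu_autocorrelation_eq_zero (N : ℕ) (hN : N.Prime) (hodd : Odd N)
    (u : ℕ) (hu : Nat.Coprime u N) (τ : ℕ) (hτ1 : 1 ≤ τ) (hτ2 : τ ≤ N - 1) :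
    ∑ n ∈ Finset.range N, zadoffChu N u n * (starRingEnd ℂ) (zadoffChu N u ((n + τ) % N)) = 0 := by
  have hN0 : N ≠ 0 := hN.ne_zero
  set w : ℂ := Complex.exp (((Real.pi : ℂ) * u * ((2 * τ : ℤ) : ℂ) / N) * Complex.I) with hw
  have hterm : ∀ n ∈ Finset.range N,
      zadoffChu N u n * (starRingEnd ℂ) (zadoffChu N u ((n + τ) % N))
        = zcf N u (τ * (τ + 1)) * w ^ n := by
    intro n _
    rw [zc_eq, zc_conj, ← zcf_add]
    have hcong : zcf N u (-(↑n * (↑n + 1)) + ↑((n + τ) % N) * (↑((n + τ) % N) + 1))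
        = zcf N u (-(↑n * (↑n + 1)) + (↑n + ↑τ) * ((↑n + ↑τ) + 1)) := by
      apply zcf_congr N u hN0
      have h1 : (N : ℤ) ∣ (((n + τ) % N : ℕ) : ℤ) - ((n : ℤ) + τ) := by
        have hm : (((n + τ) % N : ℕ) : ℤ) = ((n : ℤ) + τ) % N := by push_cast; ring
        rw [hm]
        have h2 : (N : ℤ) ∣ ((n : ℤ) + τ) - ((n : ℤ) + τ) % N :=
          Int.dvd_self_sub_of_emod_eq rfl
        exact dvd_sub_comm.mp h2
      obtain ⟨k, hk⟩ := key_dvd N hodd h1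
      exact ⟨k, by linarith⟩
    rw [hcong]
    have harg : (-(↑n * (↑n + 1)) + ((n : ℤ) + ↑τ) * ((↑n + ↑τ) + 1))
        = τ * (τ + 1) + (2 * τ) * n := by ring
    rw [harg, zcf_add]
    congr 1
    rw [zcf, hw, ← Complex.exp_nat_mul]
    congr 1
    push_cast
    ring
  rw [Finset.sum_congr rfl hterm, ← Finset.mul_sum]
  have hwN : w ^ N = 1 := by
    rw [hw, ← Complex.exp_nat_mul]
    have : (N : ℂ) * (((Real.pi : ℂ) * u * ((2 * τ : ℤ) : ℂ) / N) * Complex.I)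
        = ((u * τ : ℤ) : ℂ) * (2 * Real.pi * Complex.I) := by
      have hNc : (N : ℂ) ≠ 0 := Nat.cast_ne_zero.mpr hN.ne_zero
      field_simp
      push_cast
      ring
    rw [this, Complex.exp_int_mul_two_pi_mul_I]
  have hw1 : w ≠ 1 := by
    rw [hw]
    intro h
    rw [Complex.exp_eq_one_iff] at h
    obtain ⟨k, hk⟩ := h
    have hNc : (N : ℂ) ≠ 0 := Nat.cast_ne_zero.mpr hN.ne_zero
    have hπ : (Real.pi : ℂ) ≠ 0 := Complex.ofReal_ne_zero.mpr Real.pi_ne_zero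
    have hI : Complex.I ≠ 0 := Complex.I_ne_zero
    have hq : ((u * τ : ℤ) : ℂ) = ((k * N : ℤ) : ℂ) := by
      field_simp at hk
      have h2 : (2 * (Real.pi : ℂ) * Complex.I) * ((u : ℂ) * τ)
          = (2 * (Real.pi : ℂ) * Complex.I) * ((k : ℂ) * N) := by
        push_cast at hk
        linear_combination ((Real.pi : ℂ) * Complex.I) * hk
      have h3 := mul_left_cancel₀ (by simp [hπ, hI] : (2 * (Real.pi : ℂ) * Complex.I) ≠ 0) h2
      push_cast
      exact h3
    have : (u * τ : ℤ) = k * N := by exact_mod_cast hq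
    have hdvd : (N : ℤ) ∣ (u : ℤ) * τ := ⟨k, by linarith⟩
    have hdvd2 : N ∣ u * τ := by exact_mod_cast hdvd
    have hτN : N ∣ τ := (Nat.Coprime.dvd_of_dvd_mul_left (hu.symm) hdvd2)
    have : τ < N := by omega
    have := Nat.eq_zero_of_dvd_of_lt hτN this
    omega
  have := geom_sum_mul w N
  rw [hwN, sub_self] at this
  have hsum : ∑ n ∈ Finset.range N, w ^ n = 0 := by
    rcases mul_eq_zero.mp this with h | h
    · exact h
    · exact absurd (sub_eq_zero.mp h) hw1
  rw [hsum, mul_zero]
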